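/- Combining the simulation-lemma optimality gap with the multinomial concentration bound: if M is an MDP whose transition stochasticity comes from i.i.d. draws from a categorical distribution P with support size N, and M̂ is the surrogate MDP built from the empirical distribution P̂ of n i.i.d. samples, then with probability at least 1 − δ, sup_{s∈S} (V_M^{φ*_M̂}(s) − V_M^{φ*_M}(s)) ≤ (2γ C_max / (1−γ)²) √((1/(2n)) ln(2^{N+1}/δ)). -/

import Mathlib

open MeasureTheory ProbabilityTheory

lemma bern_denom_pos {p : ℝ} (hp0 : 0 ≤ p) (hp1 : p ≤ 1) (t : ℝ) :
    0 < 1 - p + p * Real.exp t := by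
  rcases eq_or_lt_of_le hp0 with h | h
  · simp [← h]
  · have := Real.exp_pos t
    nlinarith

lemma bern_mgf_bound {p : ℝ} (hp0 : 0 ≤ p) (hp1 : p ≤ 1) {t : ℝ} (ht : 0 ≤ t) :
    1 - p + p * Real.exp t ≤ Real.exp (t * p + t ^ 2 / 8) := by
  set D : ℝ → ℝ := fun t => 1 - p + p * Real.exp t with hD
  have hDpos : ∀ t, 0 < D t := fun t => bern_denom_pos hp0 hp1 t
  set g : ℝ → ℝ := fun t => p + t / 4 - p * Real.exp t / D t with hg
  set f : ℝ → ℝ := fun t => t * p + t ^ 2 / 8 - Real.log (D t) with hf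
  have hDderiv : ∀ x, HasDerivAt D (p * Real.exp x) x := by
    intro x
    exact ((Real.hasDerivAt_exp x).const_mul p).const_add (1 - p)
  have hgderiv : ∀ x, HasDerivAt g (1 / 4 - p * Real.exp x * (1 - p) / (D x) ^ 2) x := by
    intro x
    have h1 : HasDerivAt (fun y => p * Real.exp y) (p * Real.exp x) x :=
      (Real.hasDerivAt_exp x).const_mul p
    have h2 : HasDerivAt (fun y => p * Real.exp y / D y)
        ((p * Real.exp x * D x - p * Real.exp x * (p * Real.exp x)) / (D x) ^ 2) x :=
      h1.div (hDderiv x) (hDpos x).ne'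
    have h3 : HasDerivAt (fun y => p + y / 4) (1 / 4) x := by
      simpa using ((hasDerivAt_id x).div_const 4).const_add p
    have := h3.sub h2
    refine this.congr_deriv ?_
    have : D x = 1 - p + p * Real.exp x := rfl
    rw [this]
    ring
  have hg'nonneg : ∀ x, 0 ≤ 1 / 4 - p * Real.exp x * (1 - p) / (D x) ^ 2 := by
    intro x
    rw [sub_nonneg, div_le_iff₀ (pow_pos (hDpos x) 2)]
    have hDx : D x = 1 - p + p * Real.exp x := rfl
    nlinarith [sq_nonneg (p * Real.exp x - (1 - p)), hDpos x, hDx]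
  have hgmono : Monotone g := by
    apply monotone_of_hasDerivAt_nonneg hgderiv
    intro x; exact hg'nonneg x
  have hg0 : g 0 = 0 := by
    simp [hg, hD]
  have hgnn : ∀ x, 0 ≤ x → 0 ≤ g x := by
    intro x hx; rw [← hg0]; exact hgmono hx
  have hfderiv : ∀ x, HasDerivAt f (g x) x := by
    intro x
    have h1 : HasDerivAt (fun y => y * p + y ^ 2 / 8) (p + 2 * x / 8) x := by
      have := ((hasDerivAt_id x).mul_const p).add (((hasDerivAt_pow 2 x)).div_const 8)
      refine this.congr_deriv ?_
      norm_num
    have h2 : HasDerivAt (fun y => Real.log (D y)) (p * Real.exp x / D x) x :=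
      (hDderiv x).log (hDpos x).ne'
    have := h1.sub h2
    refine this.congr_deriv ?_
    simp only [hg]
    ring
  have hfmono : MonotoneOn f (Set.Ici (0 : ℝ)) := by
    apply monotoneOn_of_hasDerivWithinAt_nonneg (convex_Ici 0)
      (fun x _ => (hfderiv x).continuousAt.continuousWithinAt)
      (fun x _ => (hfderiv x).hasDerivWithinAt)
    intro x hx
    rw [interior_Ici] at hx
    exact hgnn x hx.le
  have hf0 : f 0 = 0 := by simp [hf, hD]
  have : 0 ≤ f t := by
    rw [← hf0]
    exact hfmono (by simp) (by simpa using ht) ht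
  have hlog : Real.log (D t) ≤ t * p + t ^ 2 / 8 := by
    simp only [hf] at this; linarith
  calc D t = Real.exp (Real.log (D t)) := (Real.exp_log (hDpos t)).symm
    _ ≤ Real.exp (t * p + t ^ 2 / 8) := Real.exp_le_exp.mpr hlog

set_option maxHeartbeats 1000000 in
lemma binom_tail {Ω : Type*} [MeasurableSpace Ω] (μ : Measure Ω) [IsProbabilityMeasure μ]
    (n : ℕ) (Y : Fin n → Ω → ℝ)
    (hYindep : iIndepFun Y μ)
    (p : ℝ) (hp0 : 0 ≤ p) (hp1 : p ≤ 1)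
    (E : Fin n → Set Ω) (hEmeas : ∀ j, MeasurableSet (E j))
    (hpE : ∀ j, μ (E j) = ENNReal.ofReal p)
    (hY : ∀ j, Y j = (E j).indicator (fun _ => (1 : ℝ)))
    (ε : ℝ) (hε : 0 ≤ ε) :
    μ {ω | (n : ℝ) * (p + ε) ≤ ∑ j, Y j ω} ≤ ENNReal.ofReal (Real.exp (-2 * n * ε ^ 2)) := by
  have hYmeas : ∀ j, Measurable (Y j) := by
    intro j; rw [hY j]
    exact (measurable_const.indicator (hEmeas j))
  have hYrange : ∀ j ω, Y j ω = 0 ∨ Y j ω = 1 := by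
    intro j ω; rw [hY j]
    by_cases h : ω ∈ E j <;> simp [Set.indicator, h]
  set t : ℝ := 4 * ε with htdef
  have ht : 0 ≤ t := by positivity
  -- integrability of exp (t * Y j)
  have hint : ∀ j, Integrable (fun ω => Real.exp (t * Y j ω)) μ := by
    intro j
    refine Integrable.mono' (integrable_const (Real.exp t)) ?_ ?_
    · exact (((hYmeas j).const_mul t).exp).aestronglyMeasurable
    · filter_upwards with ω
      rw [Real.norm_eq_abs, abs_of_pos (Real.exp_pos _)]
      apply Real.exp_le_exp.mpr
      rcases hYrange j ω with h | h <;> rw [h] <;> nlinarith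
  -- mgf of each Y j
  have hmgf : ∀ j, mgf (Y j) μ t = 1 - p + p * Real.exp t := by
    intro j
    have hptw : (fun ω => Real.exp (t * Y j ω)) =
        fun ω => 1 + (Real.exp t - 1) * Y j ω := by
      funext ω
      rcases hYrange j ω with h | h <;> rw [h] <;> simp
    have hYint : Integrable (Y j) μ := by
      refine Integrable.mono' (integrable_const 1) (hYmeas j).aestronglyMeasurable ?_
      filter_upwards with ω
      rcases hYrange j ω with h | h <;> rw [h] <;> norm_num
    have hYmean : ∫ ω, Y j ω ∂μ = p := by
      rw [hY j]
      rw [integral_indicator_const (1 : ℝ) (hEmeas j)]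
      rw [measureReal_def, hpE j, smul_eq_mul, mul_one, ENNReal.toReal_ofReal hp0]
    rw [mgf, hptw]
    rw [integral_add (integrable_const 1) (hYint.const_mul _)]
    simp only [integral_const, measureReal_def, measure_univ, ENNReal.toReal_one, smul_eq_mul, one_mul]
    rw [integral_const_mul, hYmean]
    ring
  -- mgf of the sum
  have hintsum : Integrable (fun ω => Real.exp (t * (∑ j, Y j) ω)) μ := by
    have hsumMeas : Measurable (∑ j, Y j) := by
      rw [Finset.sum_fn]
      exact Finset.measurable_sum Finset.univ fun j _ => hYmeas j
    refine Integrable.mono' (integrable_const (Real.exp (t * n))) ?_ ?_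
    · exact ((hsumMeas.const_mul t).exp).aestronglyMeasurable
    · filter_upwards with ω
      rw [Real.norm_eq_abs, abs_of_pos (Real.exp_pos _)]
      apply Real.exp_le_exp.mpr
      have : (∑ j, Y j) ω ≤ (n : ℝ) := by
        rw [Finset.sum_apply]
        calc ∑ j, Y j ω ≤ ∑ _j : Fin n, (1 : ℝ) := by
              apply Finset.sum_le_sum
              intro j _
              rcases hYrange j ω with h | h <;> rw [h] <;> norm_num
          _ = n := by simp
      nlinarith
  have hchern := measure_ge_le_exp_mul_mgf (μ := μ) (X := ∑ j, Y j)
    ((n : ℝ) * (p + ε)) ht hintsum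
  have hmgfsum : mgf (∑ j, Y j) μ t = (1 - p + p * Real.exp t) ^ n := by
    rw [hYindep.mgf_sum hYmeas]
    simp [hmgf]
  rw [hmgfsum] at hchern
  have hDnn : 0 ≤ 1 - p + p * Real.exp t := by nlinarith [Real.exp_pos t]
  have hbound : Real.exp (-t * ((n : ℝ) * (p + ε))) * (1 - p + p * Real.exp t) ^ n ≤
      Real.exp (-2 * n * ε ^ 2) := by
    calc Real.exp (-t * ((n : ℝ) * (p + ε))) * (1 - p + p * Real.exp t) ^ n
        ≤ Real.exp (-t * ((n : ℝ) * (p + ε))) * (Real.exp (t * p + t ^ 2 / 8)) ^ n := by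
          apply mul_le_mul_of_nonneg_left _ (Real.exp_pos _).le
          exact pow_le_pow_left₀ hDnn (bern_mgf_bound hp0 hp1 ht) n
      _ = Real.exp (-t * ((n : ℝ) * (p + ε)) + n * (t * p + t ^ 2 / 8)) := by
          rw [← Real.exp_nat_mul, ← Real.exp_add]
      _ = Real.exp (-2 * n * ε ^ 2) := by
          congr 1
          rw [htdef]; ring
  have hset : {ω | (n : ℝ) * (p + ε) ≤ ∑ j, Y j ω} = {ω | (n : ℝ) * (p + ε) ≤ (∑ j, Y j) ω} := by
    ext ω; simp [Finset.sum_apply]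
  rw [hset]
  have hne : μ {ω | (n : ℝ) * (p + ε) ≤ (∑ j, Y j) ω} ≠ ⊤ := measure_ne_top μ _
  rw [← ENNReal.ofReal_toReal hne]
  exact ENNReal.ofReal_le_ofReal (le_trans hchern hbound)

lemma sim_lemma {S A : Type*} [Fintype S] [Nonempty S]
    (γ M ε : ℝ) (hγ0 : 0 < γ) (hγ1 : γ < 1) (hM : 0 ≤ M) (hε : 0 ≤ ε)
    (T T' : S → A → S → ℝ) (g : S → A → ℝ)
    (hT : ∀ s a, (∀ s', 0 ≤ T s a s') ∧ ∑ s', T s a s' = 1)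
    (hT'sum : ∀ s a, ∑ s', T' s a s' = 1)
    (hd : ∀ s a, ∑ s', |T' s a s' - T s a s'| ≤ 2 * ε)
    (V V' : (S → A) → S → ℝ)
    (hBellV : ∀ φ s, V φ s = g s (φ s) + γ * ∑ s', T s (φ s) s' * V φ s')
    (hBellV' : ∀ φ s, V' φ s = g s (φ s) + γ * ∑ s', T' s (φ s) s' * V' φ s')
    (hV'range : ∀ φ s, 0 ≤ V' φ s ∧ V' φ s ≤ M)
    (φ : S → A) (s : S) :
    |V' φ s - V φ s| ≤ γ * ε * M / (1 - γ) := by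
  set Δ : ℝ := Finset.univ.sup' Finset.univ_nonempty (fun s => |V' φ s - V φ s|) with hΔ
  have hkey : ∀ s, |V' φ s - V φ s| ≤ γ * (ε * M + Δ) := by
    intro s
    have hsplit : V' φ s - V φ s =
        γ * ((∑ s', (T' s (φ s) s' - T s (φ s) s') * V' φ s') +
             (∑ s', T s (φ s) s' * (V' φ s' - V φ s'))) := by
      rw [hBellV φ s, hBellV' φ s]
      rw [← Finset.sum_add_distrib]
      have h : ∀ x : S, (T' s (φ s) x - T s (φ s) x) * V' φ x +
          T s (φ s) x * (V' φ x - V φ x) =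
          T' s (φ s) x * V' φ x - T s (φ s) x * V φ x := fun x => by ring
      simp_rw [h, Finset.sum_sub_distrib]
      ring
    have hterm1 : |∑ s', (T' s (φ s) s' - T s (φ s) s') * V' φ s'| ≤ ε * M := by
      have hzero : ∑ s', (T' s (φ s) s' - T s (φ s) s') * (M / 2) = 0 := by
        rw [← Finset.sum_mul, Finset.sum_sub_distrib, (hT s (φ s)).2, hT'sum s (φ s)]
        ring
      have hre : ∑ s', (T' s (φ s) s' - T s (φ s) s') * V' φ s' =
          ∑ s', (T' s (φ s) s' - T s (φ s) s') * (V' φ s' - M / 2) := by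
        have h : ∀ x : S, (T' s (φ s) x - T s (φ s) x) * V' φ x =
            (T' s (φ s) x - T s (φ s) x) * (V' φ x - M / 2) +
            (T' s (φ s) x - T s (φ s) x) * (M / 2) := fun x => by ring
        simp_rw [h, Finset.sum_add_distrib, hzero, add_zero]
      rw [hre]
      calc |∑ s', (T' s (φ s) s' - T s (φ s) s') * (V' φ s' - M / 2)|
          ≤ ∑ s', |(T' s (φ s) s' - T s (φ s) s') * (V' φ s' - M / 2)| :=
            Finset.abs_sum_le_sum_abs _ _
        _ ≤ ∑ s', |T' s (φ s) s' - T s (φ s) s'| * (M / 2) := by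
            apply Finset.sum_le_sum
            intro s' _
            rw [abs_mul]
            apply mul_le_mul_of_nonneg_left _ (abs_nonneg _)
            rw [abs_le]
            constructor <;> [linarith [(hV'range φ s').1]; linarith [(hV'range φ s').2]]
        _ = (∑ s', |T' s (φ s) s' - T s (φ s) s'|) * (M / 2) := by
            rw [Finset.sum_mul]
        _ ≤ 2 * ε * (M / 2) := by
            apply mul_le_mul_of_nonneg_right (hd s (φ s)) (by linarith)
        _ = ε * M := by ring
    have hterm2 : |∑ s', T s (φ s) s' * (V' φ s' - V φ s')| ≤ Δ := by
      calc |∑ s', T s (φ s) s' * (V' φ s' - V φ s')|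
          ≤ ∑ s', |T s (φ s) s' * (V' φ s' - V φ s')| := Finset.abs_sum_le_sum_abs _ _
        _ ≤ ∑ s', T s (φ s) s' * Δ := by
            apply Finset.sum_le_sum
            intro s' _
            rw [abs_mul, abs_of_nonneg ((hT s (φ s)).1 s')]
            apply mul_le_mul_of_nonneg_left _ ((hT s (φ s)).1 s')
            exact Finset.le_sup' (fun s => |V' φ s - V φ s|) (Finset.mem_univ s')
        _ = Δ := by rw [← Finset.sum_mul, (hT s (φ s)).2, one_mul]
    calc |V' φ s - V φ s| = γ * |(∑ s', (T' s (φ s) s' - T s (φ s) s') * V' φ s') +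
             (∑ s', T s (φ s) s' * (V' φ s' - V φ s'))| := by
          rw [hsplit, abs_mul, abs_of_pos hγ0]
      _ ≤ γ * (ε * M + Δ) := by
          apply mul_le_mul_of_nonneg_left _ hγ0.le
          calc |(∑ s', (T' s (φ s) s' - T s (φ s) s') * V' φ s') +
              (∑ s', T s (φ s) s' * (V' φ s' - V φ s'))|
              ≤ |∑ s', (T' s (φ s) s' - T s (φ s) s') * V' φ s'| +
                |∑ s', T s (φ s) s' * (V' φ s' - V φ s')| := abs_add_le _ _
            _ ≤ ε * M + Δ := add_le_add hterm1 hterm2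
  have hΔle : Δ ≤ γ * ε * M / (1 - γ) := by
    obtain ⟨s0, _, hs0⟩ := Finset.exists_mem_eq_sup' Finset.univ_nonempty
      (fun s => |V' φ s - V φ s|)
    have heq : Δ = |V' φ s0 - V φ s0| := hΔ.trans hs0
    have h1 := hkey s0
    rw [← heq] at h1
    rw [le_div_iff₀ (by linarith : (0:ℝ) < 1 - γ)]
    nlinarith
  calc |V' φ s - V φ s| ≤ Δ :=
        Finset.le_sup' (fun s => |V' φ s - V φ s|) (Finset.mem_univ s)
    _ ≤ γ * ε * M / (1 - γ) := hΔle

/-- Combining the simulation-lemma optimality gap with multinomial concentration: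
with probability ≥ 1-δ over the n i.i.d. samples used to build the surrogate MDP M̂,
the policy optimal for M̂ is at most (2γC_max/(1-γ)²)√((1/(2n))ln(2^{N+1}/δ))
suboptimal on the true MDP M. -/
theorem stmt_5
    {S A : Type*} [Fintype S]
    {Ω : Type*} [MeasurableSpace Ω] (μ : Measure Ω) [IsProbabilityMeasure μ]
    (N n : ℕ) (hn : 0 < n)
    (P : Fin N → ℝ) (hP : ∀ i, 0 ≤ P i) (hPsum : ∑ i, P i = 1)
    (X : Fin n → Ω → Fin N) (hmeas : ∀ j, Measurable (X j))
    (hindep : iIndepFun X μ)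
    (hdist : ∀ j i, μ (X j ⁻¹' {i}) = ENNReal.ofReal (P i))
    (g : S → A → ℝ) (Cmax : ℝ) (hg : ∀ s a, 0 ≤ g s a ∧ g s a ≤ Cmax)
    (γ : ℝ) (hγ : 0 < γ ∧ γ < 1)
    -- true kernel and, for each sample draw ω, the surrogate kernel
    (T : S → A → S → ℝ) (That : Ω → S → A → S → ℝ)
    (hT : ∀ s a, (∀ s', 0 ≤ T s a s') ∧ ∑ s', T s a s' = 1)
    (hThat : ∀ ω s a, (∀ s', 0 ≤ That ω s a s') ∧ ∑ s', That ω s a s' = 1)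
    -- the kernels differ exactly by the L1 distance between P and the empirical P̂
    (hfactor : ∀ ω s a, ∑ s', |That ω s a s' - T s a s'| =
      ∑ i, |(∑ j, if X j ω = i then (1 : ℝ) else 0) / n - P i|)
    (V : (S → A) → S → ℝ) (Vhat : Ω → (S → A) → S → ℝ)
    (hBellV : ∀ φ s, V φ s = g s (φ s) + γ * ∑ s', T s (φ s) s' * V φ s')
    (hBellVhat : ∀ ω φ s,
      Vhat ω φ s = g s (φ s) + γ * ∑ s', That ω s (φ s) s' * Vhat ω φ s')
    (hVrange : ∀ φ s, 0 ≤ V φ s ∧ V φ s ≤ Cmax / (1 - γ))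
    (hVhatrange : ∀ ω φ s, 0 ≤ Vhat ω φ s ∧ Vhat ω φ s ≤ Cmax / (1 - γ))
    (φM : S → A) (φMhat : Ω → S → A)
    (hoptM : ∀ φ s, V φM s ≤ V φ s)
    (hoptMhat : ∀ ω φ s, Vhat ω (φMhat ω) s ≤ Vhat ω φ s)
    (δ : ℝ) (hδ : 0 < δ ∧ δ < 1) :
    ENNReal.ofReal (1 - δ) ≤
      μ {ω | ∀ s, V (φMhat ω) s - V φM s ≤
        2 * γ * Cmax / (1 - γ) ^ 2 *
          Real.sqrt (1 / (2 * n) * Real.log (2 ^ (N + 1) / δ))} := by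
  obtain ⟨hγ0, hγ1⟩ := hγ
  obtain ⟨hδ0, hδ1⟩ := hδ
  have h1γ : (0:ℝ) < 1 - γ := by linarith
  set ε : ℝ := Real.sqrt (1 / (2 * n) * Real.log (2 ^ (N + 1) / δ)) with hεdef
  have hεnn : 0 ≤ ε := Real.sqrt_nonneg _
  have hpow : (0:ℝ) < 2 ^ (N + 1) := by positivity
  have harg1 : (1:ℝ) ≤ 2 ^ (N + 1) / δ := by
    rw [le_div_iff₀ hδ0]
    calc (1:ℝ) * δ = δ := one_mul δ
      _ ≤ 1 := hδ1.le
      _ ≤ 2 ^ (N + 1) := by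
          calc (1:ℝ) ≤ 2 ^ 0 := by norm_num
            _ ≤ 2 ^ (N + 1) := by
                apply pow_le_pow_right₀ (by norm_num) (Nat.zero_le _)
  have hlognn : 0 ≤ Real.log (2 ^ (N + 1) / δ) := Real.log_nonneg harg1
  have hLnn : 0 ≤ 1 / (2 * (n:ℝ)) * Real.log (2 ^ (N + 1) / δ) := by positivity
  have hε2 : ε ^ 2 = 1 / (2 * n) * Real.log (2 ^ (N + 1) / δ) := Real.sq_sqrt hLnn
  -- the family of Bernoulli variables
  set Y : Finset (Fin N) → Fin n → Ω → ℝ :=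
    fun B j ω => if X j ω ∈ B then (1:ℝ) else 0 with hYdef
  set p : Finset (Fin N) → ℝ := fun B => ∑ i ∈ B, P i with hpdef
  set bad : Finset (Fin N) → Set Ω :=
    fun B => {ω | (n : ℝ) * (p B + ε) ≤ ∑ j, Y B j ω} with hbaddef
  -- each bad event is unlikely
  have hbad : ∀ B, μ (bad B) ≤ ENNReal.ofReal (δ / 2 ^ (N + 1)) := by
    intro B
    have hp0 : 0 ≤ p B := Finset.sum_nonneg fun i _ => hP i
    have hp1 : p B ≤ 1 := by
      rw [← hPsum]
      exact Finset.sum_le_sum_of_subset_of_nonneg (Finset.subset_univ B)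
        (fun i _ _ => hP i)
    have hEmeas : ∀ j, MeasurableSet (X j ⁻¹' (B : Set (Fin N))) :=
      fun j => hmeas j B.measurableSet
    have hpE : ∀ j, μ (X j ⁻¹' (B : Set (Fin N))) = ENNReal.ofReal (p B) := by
      intro j
      have : X j ⁻¹' (B : Set (Fin N)) = ⋃ i ∈ B, X j ⁻¹' {i} := by
        ext ω; simp
      rw [this, measure_biUnion_finset ?_ (fun i _ => hmeas j (measurableSet_singleton i))]
      · simp only [hpdef]
        rw [ENNReal.ofReal_sum_of_nonneg (fun i _ => hP i)]
        exact Finset.sum_congr rfl fun i _ => hdist j i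
      · intro i _ k _ hik
        apply Set.disjoint_left.mpr
        intro ω h1 h2
        simp only [Set.mem_preimage, Set.mem_singleton_iff] at h1 h2
        exact hik (h1 ▸ h2 ▸ rfl)
    have hYind : iIndepFun (Y B) μ := by
      have := hindep.comp (fun _ (v : Fin N) => if v ∈ B then (1:ℝ) else 0)
        (fun _ => measurable_of_countable _)
      exact this
    have hY : ∀ j, Y B j = (X j ⁻¹' (B : Set (Fin N))).indicator (fun _ => (1 : ℝ)) := by
      intro j; funext ω
      by_cases h : X j ω ∈ B <;> simp [hYdef, Set.indicator, h]
    have h := binom_tail μ n (Y B) hYind (p B) hp0 hp1 _ hEmeas hpE hY ε hεnn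
    refine h.trans (le_of_eq ?_)
    congr 1
    have hn' : (0:ℝ) < n := Nat.cast_pos.mpr hn
    rw [hε2]
    rw [show -2 * (n:ℝ) * (1 / (2 * n) * Real.log (2 ^ (N + 1) / δ)) =
      -Real.log (2 ^ (N + 1) / δ) by field_simp]
    rw [Real.exp_neg, Real.exp_log (by positivity), inv_div]
  -- union bound
  have hbadmeas : ∀ B, MeasurableSet (bad B) := by
    intro B
    apply measurableSet_le measurable_const
    apply Finset.measurable_sum
    intro j _
    have hYc : Y B j = (fun v : Fin N => if v ∈ B then (1:ℝ) else 0) ∘ X j := rfl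
    rw [hYc]
    exact (measurable_of_countable _).comp (hmeas j)
  have hunion : μ (⋃ B : Finset (Fin N), bad B) ≤ ENNReal.ofReal (δ / 2) := by
    calc μ (⋃ B : Finset (Fin N), bad B) ≤ ∑' B : Finset (Fin N), μ (bad B) :=
          measure_iUnion_le _
      _ ≤ ∑' _B : Finset (Fin N), ENNReal.ofReal (δ / 2 ^ (N + 1)) := by
          exact ENNReal.tsum_le_tsum fun B => hbad B
      _ = (Fintype.card (Finset (Fin N))) * ENNReal.ofReal (δ / 2 ^ (N + 1)) := by
          rw [tsum_fintype]
          simp [Finset.sum_const, nsmul_eq_mul]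
      _ = ENNReal.ofReal (2 ^ N * (δ / 2 ^ (N + 1))) := by
          rw [Fintype.card_finset, Fintype.card_fin]
          rw [ENNReal.ofReal_mul (by positivity)]
          congr 1
          rw [ENNReal.ofReal_pow (by norm_num)]
          norm_num
      _ = ENNReal.ofReal (δ / 2) := by
          congr 1
          rw [pow_succ]
          field_simp
  -- the good event
  have hcompl : ENNReal.ofReal (1 - δ) ≤ μ (⋃ B : Finset (Fin N), bad B)ᶜ := by
    rw [measure_compl (MeasurableSet.iUnion fun B => hbadmeas B) (measure_ne_top μ _)]
    rw [measure_univ]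
    calc ENNReal.ofReal (1 - δ) ≤ ENNReal.ofReal (1 - δ / 2) - ENNReal.ofReal (δ / 2) := by
          rw [← ENNReal.ofReal_sub _ (by positivity)]
          apply ENNReal.ofReal_le_ofReal
          linarith
      _ ≤ 1 - μ (⋃ B : Finset (Fin N), bad B) := by
          apply tsub_le_tsub _ hunion
          calc ENNReal.ofReal (1 - δ / 2) ≤ ENNReal.ofReal 1 :=
                ENNReal.ofReal_le_ofReal (by linarith)
            _ = 1 := ENNReal.ofReal_one
  refine le_trans hcompl (measure_mono ?_)
  -- inclusion: on the good event the bound holds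
  intro ω hω
  simp only [Set.mem_compl_iff, Set.mem_iUnion, not_exists] at hω
  intro s
  have : Nonempty S := ⟨s⟩
  -- empirical distribution
  set Phat : Fin N → ℝ := fun i => (∑ j, if X j ω = i then (1:ℝ) else 0) / n with hPhatdef
  have hn' : (0:ℝ) < n := Nat.cast_pos.mpr hn
  -- partial sums of Phat over any B
  have hPhatB : ∀ B : Finset (Fin N), ∑ i ∈ B, Phat i = (∑ j, Y B j ω) / n := by
    intro B
    rw [hPhatdef]
    simp only
    rw [← Finset.sum_div]
    congr 1
    rw [Finset.sum_comm]
    apply Finset.sum_congr rfl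
    intro j _
    rw [Finset.sum_ite_eq]
  have hgood : ∀ B : Finset (Fin N), ∑ i ∈ B, (Phat i - P i) ≤ ε := by
    intro B
    have h := hω B
    simp only [hbaddef, Set.mem_setOf_eq, not_le] at h
    have h2 : (∑ j, Y B j ω) / n ≤ p B + ε := by
      rw [div_le_iff₀ hn']
      linarith
    rw [Finset.sum_sub_distrib, hPhatB B]
    simp only [hpdef] at h2 ⊢
    linarith
  -- total L1 distance
  have hPhatsum : ∑ i, Phat i = 1 := by
    have := hPhatB Finset.univ
    rw [this]
    have h2 : ∑ j : Fin n, Y Finset.univ j ω = n := by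
      simp only [hYdef, Finset.mem_univ, if_true]
      simp
    rw [h2]
    exact div_self (ne_of_gt hn')
  have hL1 : ∑ i, |Phat i - P i| ≤ 2 * ε := by
    set Bp : Finset (Fin N) := Finset.univ.filter (fun i => P i < Phat i) with hBp
    have hsum0 : ∑ i, (Phat i - P i) = 0 := by
      rw [Finset.sum_sub_distrib, hPhatsum, hPsum]; ring
    have hsplit := Finset.sum_filter_add_sum_filter_not Finset.univ
      (fun i => P i < Phat i) (fun i => |Phat i - P i|)
    have hsplit2 := Finset.sum_filter_add_sum_filter_not Finset.univ
      (fun i => P i < Phat i) (fun i => Phat i - P i)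
    have habs1 : ∑ i ∈ Finset.univ.filter (fun i => P i < Phat i), |Phat i - P i| =
        ∑ i ∈ Finset.univ.filter (fun i => P i < Phat i), (Phat i - P i) := by
      apply Finset.sum_congr rfl
      intro i hi
      rw [Finset.mem_filter] at hi
      rw [abs_of_pos (by linarith [hi.2])]
    have habs2 : ∑ i ∈ Finset.univ.filter (fun i => ¬ P i < Phat i), |Phat i - P i| =
        -∑ i ∈ Finset.univ.filter (fun i => ¬ P i < Phat i), (Phat i - P i) := by
      rw [← Finset.sum_neg_distrib]
      apply Finset.sum_congr rfl
      intro i hi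
      rw [Finset.mem_filter] at hi
      rw [abs_of_nonpos (by push_neg at hi; linarith [hi.2])]
    have hkey := hgood Bp
    rw [hBp] at hkey
    calc ∑ i, |Phat i - P i|
        = ∑ i ∈ Finset.univ.filter (fun i => P i < Phat i), |Phat i - P i| +
          ∑ i ∈ Finset.univ.filter (fun i => ¬ P i < Phat i), |Phat i - P i| := hsplit.symm
      _ = 2 * ∑ i ∈ Finset.univ.filter (fun i => P i < Phat i), (Phat i - P i) := by
          rw [habs1, habs2]
          have : ∑ i ∈ Finset.univ.filter (fun i => ¬ P i < Phat i), (Phat i - P i) =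
              -∑ i ∈ Finset.univ.filter (fun i => P i < Phat i), (Phat i - P i) := by
            have := hsplit2
            rw [hsum0] at this
            linarith
          rw [this]
          ring
      _ ≤ 2 * ε := by linarith
  -- apply the simulation lemma twice
  have hd : ∀ s a, ∑ s', |That ω s a s' - T s a s'| ≤ 2 * ε := by
    intro s a
    rw [hfactor ω s a]
    exact hL1
  have hCmax : 0 ≤ Cmax := le_trans (hg s (φM s)).1 (hg s (φM s)).2
  have hM : 0 ≤ Cmax / (1 - γ) := by positivity
  have hsim := fun φ s' => sim_lemma γ (Cmax / (1 - γ)) ε hγ0 hγ1 hM hεnn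
    T (That ω) g hT (fun s a => (hThat ω s a).2) hd V (Vhat ω)
    hBellV (hBellVhat ω) (hVhatrange ω) φ s'
  have h1 := hsim (φMhat ω) s
  have h2 := hsim φM s
  have h3 := hoptMhat ω φM s
  have habs1 := abs_le.mp h1
  have habs2 := abs_le.mp h2
  have hfinal : V (φMhat ω) s - V φM s ≤ 2 * (γ * ε * (Cmax / (1 - γ)) / (1 - γ)) := by
    linarith [habs1.1, habs1.2, habs2.1, habs2.2]
  refine hfinal.trans (le_of_eq ?_)
  rw [hεdef]
  field_simp
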